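/- (Persistence of invalidity under further products.) Let W, Z, V be processes such that the product P = W ⊗ Z for the combined parties is not a valid process. Then for any valid process V on a matching set of parties, the further product P ⊗ V (for the correspondingly combined parties) is also not a valid process: the nontrivial Hilbert–Schmidt term of P that is in type on no combined party, tensored with the identity term of V, is a nonzero nontrivial term of P ⊗ V that is in type on no combined party. Consequently, if a set of processes cannot form a valid product in one sequence of iterated pairwise products, no ordering of the iterated products yields a valid process. -/

import Mathlib

open Matrix Kronecker BigOperators
open scoped ComplexOrder

namespace ProcessPaper

/-- A (generalized) Hilbert–Schmidt basis of operators on a finite-dimensional Hilbert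
space with orthonormal basis indexed by `n`: a family of Hermitian matrices indexed by
`ι` (with `Fintype.card ι = (Fintype.card n) ^ 2`), whose distinguished element `σ 0`
is the identity, whose other elements are traceless, which are mutually orthogonal
under the trace inner product, and which are all nonzero. -/
def IsHSBasis {n : Type*} [Fintype n] [DecidableEq n] {ι : Type*} [Fintype ι] [Zero ι]
    (σ : ι → Matrix n n ℂ) : Prop :=
  Fintype.card ι = (Fintype.card n) ^ 2 ∧
  (∀ i, (σ i).IsHermitian) ∧
  σ 0 = 1 ∧
  (∀ i, i ≠ 0 → (σ i).trace = 0) ∧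
  (∀ i j, i ≠ j → (σ i * σ j).trace = 0) ∧
  (∀ i, σ i ≠ 0)

variable {P : Type*} [Fintype P] [DecidableEq P]

section defs

variable {I O : P → Type*} [∀ p, Fintype (I p)] [∀ p, DecidableEq (I p)]
  [∀ p, Fintype (O p)] [∀ p, DecidableEq (O p)]
  {ιI ιO : P → Type*} [∀ p, Fintype (ιI p)] [∀ p, Zero (ιI p)]
  [∀ p, Fintype (ιO p)] [∀ p, Zero (ιO p)]

/-- The tensor product, over all parties, of party-local operators
(each party `p` carries the Hilbert space of its input system `I p`
tensored with its output system `O p`). -/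
def tensorFamily (M : ∀ p, Matrix (I p × O p) (I p × O p) ℂ) :
    Matrix ((p : P) → I p × O p) ((p : P) → I p × O p) ℂ :=
  fun x y => ∏ p, M p (x p) (y p)

/-- The Hilbert–Schmidt basis term with multi-index `t`:
`⨂_p σI p (t p).1 ⊗ σO p (t p).2`. -/
def hsTerm (σI : ∀ p, ιI p → Matrix (I p) (I p) ℂ)
    (σO : ∀ p, ιO p → Matrix (O p) (O p) ℂ)
    (t : ∀ p, ιI p × ιO p) :
    Matrix ((p : P) → I p × O p) ((p : P) → I p × O p) ℂ :=
  fun x y => ∏ p, σI p (t p).1 (x p).1 (y p).1 * σO p (t p).2 (x p).2 (y p).2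

/-- The operator with Hilbert–Schmidt coefficients `w`. -/
noncomputable def expand (σI : ∀ p, ιI p → Matrix (I p) (I p) ℂ)
    (σO : ∀ p, ιO p → Matrix (O p) (O p) ℂ)
    (w : (∀ p, ιI p × ιO p) → ℝ) :
    Matrix ((p : P) → I p × O p) ((p : P) → I p × O p) ℂ :=
  ∑ t : ∀ p, ιI p × ιO p, (w t : ℂ) • hsTerm σI σO t

end defs

section types

variable {ιI ιO : P → Type*} [∀ p, Zero (ιI p)] [∀ p, Zero (ιO p)]

/-- A term is trivial on party `p` if its indices on both the input and the output
system of `p` are zero (identity factor on party `p`). -/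
def TrivialAt (t : ∀ p, ιI p × ιO p) (p : P) : Prop :=
  (t p).1 = 0 ∧ (t p).2 = 0

/-- A term is in type on party `p` if it is nontrivial on the input system of `p`
and trivial (identity) on the output system of `p`. -/
def InTypeAt (t : ∀ p, ιI p × ιO p) (p : P) : Prop :=
  (t p).1 ≠ 0 ∧ (t p).2 = 0

/-- A term includes the out type on party `p` if it is nontrivial on the output
system of `p`. -/
def IncludesOutAt (t : ∀ p, ιI p × ιO p) (p : P) : Prop :=
  (t p).2 ≠ 0

/-- A term is nontrivial if it is nontrivial on some party
(i.e. it is not the identity term). -/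
def NontrivialTerm (t : ∀ p, ιI p × ιO p) : Prop :=
  ∃ p, ¬ TrivialAt t p

/-- The Oreshkov–Giarmatzi condition on Hilbert–Schmidt coefficients: every nonzero
nontrivial term is in type on at least one party. -/
def OGCoeffs (w : (∀ p, ιI p × ιO p) → ℝ) : Prop :=
  ∀ t, w t ≠ 0 → NontrivialTerm t → ∃ p, InTypeAt t p

end types

section process

variable {I O : P → Type*} [∀ p, Fintype (I p)] [∀ p, DecidableEq (I p)]
  [∀ p, Fintype (O p)] [∀ p, DecidableEq (O p)]
  {ιI ιO : P → Type*} [∀ p, Fintype (ιI p)] [∀ p, Zero (ιI p)]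
  [∀ p, Fintype (ιO p)] [∀ p, Zero (ιO p)]

/-- `W` is a valid process with Hilbert–Schmidt coefficients `w` (relative to the
Hilbert–Schmidt bases `σI`, `σO`): it is positive semidefinite, has trace equal to the
product `d_O` of the output dimensions, has expansion given by `w`, and every nonzero
nontrivial Hilbert–Schmidt term of it is in type on at least one party. -/
def IsProcessWith (σI : ∀ p, ιI p → Matrix (I p) (I p) ℂ)
    (σO : ∀ p, ιO p → Matrix (O p) (O p) ℂ)
    (W : Matrix ((p : P) → I p × O p) ((p : P) → I p × O p) ℂ)
    (w : (∀ p, ιI p × ιO p) → ℝ) : Prop :=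
  W.PosSemidef ∧
  W.trace = ∏ p, (Fintype.card (O p) : ℂ) ∧
  W = expand σI σO w ∧
  OGCoeffs w

/-- `W` is a valid process (relative to the Hilbert–Schmidt bases `σI`, `σO`). -/
def IsProcess (σI : ∀ p, ιI p → Matrix (I p) (I p) ℂ)
    (σO : ∀ p, ιO p → Matrix (O p) (O p) ℂ)
    (W : Matrix ((p : P) → I p × O p) ((p : P) → I p × O p) ℂ) : Prop :=
  ∃ w, IsProcessWith σI σO W w

end process

section product

variable {I' O' I'' O'' : P → Type*}

/-- The tensor product `P = W ⊗ Z` of an operator `W` for parties `A', B', …` and an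
operator `Z` for parties `A'', B'', …`, regarded as an operator for the combined
parties `A = A'A''` (input `a₁ = a₁'a₁''`, output `a₂ = a₂'a₂''`), `B = B'B''`, …. -/
def prodOp (W : Matrix ((p : P) → I' p × O' p) ((p : P) → I' p × O' p) ℂ)
    (Z : Matrix ((p : P) → I'' p × O'' p) ((p : P) → I'' p × O'' p) ℂ) :
    Matrix ((p : P) → (I' p × I'' p) × (O' p × O'' p))
      ((p : P) → (I' p × I'' p) × (O' p × O'' p)) ℂ :=
  fun x y =>
    W (fun p => ((x p).1.1, (x p).2.1)) (fun p => ((y p).1.1, (y p).2.1)) *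
    Z (fun p => ((x p).1.2, (x p).2.2)) (fun p => ((y p).1.2, (y p).2.2))

end product

/-- The Hilbert–Schmidt basis of a combined system, consisting of the tensor (Kronecker)
products of the basis elements of the two subsystems; its distinguished (identity)
element is the product of the two distinguished elements. -/
def prodBasis {n n' ι ι' : Type*} (σ : ι → Matrix n n ℂ) (σ' : ι' → Matrix n' n' ℂ) :
    ι × ι' → Matrix (n × n') (n × n') ℂ :=
  fun i => σ i.1 ⊗ₖ σ' i.2

section coeffs

variable {ιI' ιO' ιI'' ιO'' : P → Type*}

/-- The Hilbert–Schmidt coefficients of a tensor product `W ⊗ Z` in terms of the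
coefficients `w` of `W` and `z` of `Z`. -/
def prodCoeffs (w : (∀ p, ιI' p × ιO' p) → ℝ) (z : (∀ p, ιI'' p × ιO'' p) → ℝ) :
    (∀ p, (ιI' p × ιI'' p) × (ιO' p × ιO'' p)) → ℝ :=
  fun u => w (fun p => ((u p).1.1, (u p).2.1)) * z (fun p => ((u p).1.2, (u p).2.2))

/-- The multi-index of the tensor product of the term `t` of `W` and the term `s`
of `Z`, as a term for the combined parties. -/
def combineTerm (t : ∀ p, ιI' p × ιO' p) (s : ∀ p, ιI'' p × ιO'' p) :
    ∀ p, (ιI' p × ιI'' p) × (ιO' p × ιO'' p) :=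
  fun p => (((t p).1, (s p).1), ((t p).2, (s p).2))

end coeffs

section twoparty

variable {ιI ιO : Fin 2 → Type*} [∀ p, Zero (ιI p)] [∀ p, Zero (ιO p)]

/-- For two parties `A` (party `0`) and `B` (party `1`), an `A` to `B` signalling
term: a term of type `a₂b₁` or `a₁a₂b₁`, i.e. nontrivial on `a₂` and on `b₁` and
trivial on `b₂`. -/
def AtoBSig (t : ∀ p, ιI p × ιO p) : Prop :=
  (t 0).2 ≠ 0 ∧ (t 1).1 ≠ 0 ∧ (t 1).2 = 0

/-- A `B` to `A` signalling term: a term of type `a₁b₂` or `a₁b₁b₂`, i.e. nontrivial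
on `b₂` and on `a₁` and trivial on `a₂`. -/
def BtoASig (t : ∀ p, ιI p × ιO p) : Prop :=
  (t 1).2 ≠ 0 ∧ (t 0).1 ≠ 0 ∧ (t 0).2 = 0

end twoparty


section AuxGeneral

variable {P : Type*} [Fintype P] [DecidableEq P]

lemma sum_prod_pi {κ : P → Type*} [∀ p, Fintype (κ p)] (f : ∀ p, κ p → ℂ) :
    ∑ x : ∀ p, κ p, ∏ p, f p (x p) = ∏ p, ∑ a, f p a :=
  (Fintype.prod_sum f).symm

lemma sum_sum_prod_pi {κ : P → Type*} [∀ p, Fintype (κ p)] (f : ∀ p, κ p → κ p → ℂ) :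
    ∑ x : ∀ p, κ p, ∑ y : ∀ p, κ p, ∏ p, f p (x p) (y p) = ∏ p, ∑ a, ∑ b, f p a b := by
  have h1 : ∀ x : ∀ p, κ p, ∑ y : ∀ p, κ p, ∏ p, f p (x p) (y p) = ∏ p, ∑ b, f p (x p) b :=
    fun x => sum_prod_pi (fun p b => f p (x p) b)
  simp_rw [h1]
  exact sum_prod_pi (fun p a => ∑ b, f p a b)

lemma sum_pair_factor {I O : Type*} [Fintype I] [Fintype O] (f : I → I → ℂ) (g : O → O → ℂ) :
    ∑ a : I × O, ∑ b : I × O, f a.1 b.1 * g a.2 b.2 =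
      (∑ a1, ∑ b1, f a1 b1) * (∑ a2, ∑ b2, g a2 b2) := by
  have inner : ∀ (F : I → ℂ) (G : O → ℂ),
      ∑ b : I × O, F b.1 * G b.2 = (∑ b1, F b1) * (∑ b2, G b2) := by
    intro F G
    rw [Fintype.sum_mul_sum]
    exact Fintype.sum_prod_type _
  simp_rw [inner]
  exact inner (fun a1 => ∑ b1, f a1 b1) (fun a2 => ∑ b2, g a2 b2)

lemma trace_mul_eq {n : Type*} [Fintype n] (M N : Matrix n n ℂ) :
    (M * N).trace = ∑ a, ∑ b, M a b * N b a := by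
  simp [Matrix.trace, Matrix.diag, Matrix.mul_apply]

lemma trace_mul_self_ne_zero {n : Type*} [Fintype n] {A : Matrix n n ℂ}
    (hA : A.IsHermitian) (h0 : A ≠ 0) : (A * A).trace ≠ 0 := by
  have key : (A * A).trace = ((∑ a, ∑ b, Complex.normSq (A a b) : ℝ) : ℂ) := by
    rw [trace_mul_eq]
    push_cast
    refine Finset.sum_congr rfl fun a _ => Finset.sum_congr rfl fun b _ => ?_
    rw [← hA.apply b a]
    simp [RCLike.star_def, Complex.mul_conj]
  rw [key]
  norm_cast
  intro hz
  apply h0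
  ext a b
  have h1 : ∀ a ∈ Finset.univ, (0:ℝ) ≤ ∑ b, Complex.normSq (A a b) :=
    fun a _ => Finset.sum_nonneg fun b _ => Complex.normSq_nonneg _
  have h2 := (Finset.sum_eq_zero_iff_of_nonneg h1).mp hz a (Finset.mem_univ a)
  have h3 := (Finset.sum_eq_zero_iff_of_nonneg
    (fun b _ => Complex.normSq_nonneg (A a b))).mp h2 b (Finset.mem_univ b)
  simpa [Complex.normSq_eq_zero] using h3

/-- The orthogonality data we need from a Hilbert–Schmidt basis. -/
def OrthFam {n ι : Type*} [Fintype n] (σ : ι → Matrix n n ℂ) : Prop :=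
  (∀ i j, i ≠ j → (σ i * σ j).trace = 0) ∧ ∀ i, (σ i * σ i).trace ≠ 0

lemma IsHSBasis.orthFam {n ι : Type*} [Fintype n] [DecidableEq n] [Fintype ι] [Zero ι]
    {σ : ι → Matrix n n ℂ} (h : IsHSBasis σ) : OrthFam σ :=
  ⟨h.2.2.2.2.1, fun i => trace_mul_self_ne_zero (h.2.1 i) (h.2.2.2.2.2 i)⟩

lemma IsHSBasis.card_pos {n ι : Type*} [Fintype n] [DecidableEq n] [Fintype ι] [Zero ι]
    {σ : ι → Matrix n n ℂ} (h : IsHSBasis σ) : 0 < Fintype.card n := by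
  by_contra hc
  have hn : Fintype.card n = 0 := by omega
  have : Nonempty ι := ⟨0⟩
  have := Fintype.card_pos (α := ι)
  rw [h.1, hn] at this
  simp at this

lemma OrthFam.prodBasis {n n' ι ι' : Type*} [Fintype n] [Fintype n']
    {σ : ι → Matrix n n ℂ} {σ' : ι' → Matrix n' n' ℂ}
    (h : OrthFam σ) (h' : OrthFam σ') : OrthFam (prodBasis σ σ') := by
  constructor
  · rintro ⟨i1, i2⟩ ⟨j1, j2⟩ hij
    show ((σ i1 ⊗ₖ σ' i2) * (σ j1 ⊗ₖ σ' j2)).trace = 0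
    rw [← Matrix.mul_kronecker_mul, Matrix.trace_kronecker]
    by_cases h1 : i1 = j1
    · have h2 : i2 ≠ j2 := fun h2 => hij (by rw [h1, h2])
      rw [h'.1 _ _ h2, mul_zero]
    · rw [h.1 _ _ h1, zero_mul]
  · rintro ⟨i1, i2⟩
    show ((σ i1 ⊗ₖ σ' i2) * (σ i1 ⊗ₖ σ' i2)).trace ≠ 0
    rw [← Matrix.mul_kronecker_mul, Matrix.trace_kronecker]
    exact mul_ne_zero (h.2 _) (h'.2 _)

lemma kronecker_conjTranspose' {m n m' n' : Type*} (A : Matrix m m' ℂ) (B : Matrix n n' ℂ) :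
    (A ⊗ₖ B)ᴴ = Aᴴ ⊗ₖ Bᴴ := by
  ext i j
  simp [Matrix.conjTranspose_apply, mul_comm]

lemma posSemidef_kron {m n : Type*} [Fintype m] [Fintype n] [DecidableEq m] [DecidableEq n]
    {A : Matrix m m ℂ} {B : Matrix n n ℂ}
    (hA : A.PosSemidef) (hB : B.PosSemidef) : (A ⊗ₖ B).PosSemidef := by
  exact hA.kronecker hB

end AuxGeneral

section AuxHS

set_option linter.unusedSectionVars false

variable {P : Type*} [Fintype P] [DecidableEq P]
  {I O : P → Type*} [∀ p, Fintype (I p)] [∀ p, DecidableEq (I p)]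
  [∀ p, Fintype (O p)] [∀ p, DecidableEq (O p)]
  {ιI ιO : P → Type*} [∀ p, Fintype (ιI p)] [∀ p, Zero (ιI p)]
  [∀ p, Fintype (ιO p)] [∀ p, Zero (ιO p)]

lemma hsTerm_trace (σI : ∀ p, ιI p → Matrix (I p) (I p) ℂ)
    (σO : ∀ p, ιO p → Matrix (O p) (O p) ℂ) (t : ∀ p, ιI p × ιO p) :
    (hsTerm σI σO t).trace = ∏ p, (σI p (t p).1).trace * (σO p (t p).2).trace := by
  have hR : ∀ p, (σI p (t p).1).trace * (σO p (t p).2).trace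
      = ∑ a : I p × O p, σI p (t p).1 a.1 a.1 * σO p (t p).2 a.2 a.2 := by
    intro p
    rw [Fintype.sum_prod_type]
    exact Fintype.sum_mul_sum _ _
  rw [Finset.prod_congr rfl fun p _ => hR p]
  simp only [Matrix.trace, Matrix.diag, hsTerm]
  exact sum_prod_pi fun p (a : I p × O p) => σI p (t p).1 a.1 a.1 * σO p (t p).2 a.2 a.2

lemma hsTerm_mul_trace (σI : ∀ p, ιI p → Matrix (I p) (I p) ℂ)
    (σO : ∀ p, ιO p → Matrix (O p) (O p) ℂ) (t s : ∀ p, ιI p × ιO p) :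
    (hsTerm σI σO t * hsTerm σI σO s).trace =
      ∏ p, ((σI p (t p).1 * σI p (s p).1).trace * (σO p (t p).2 * σO p (s p).2).trace) := by
  rw [trace_mul_eq]
  have hstep : ∀ x y : ∀ p, I p × O p,
      hsTerm σI σO t x y * hsTerm σI σO s y x
        = ∏ p, (σI p (t p).1 (x p).1 (y p).1 * σI p (s p).1 (y p).1 (x p).1) *
            (σO p (t p).2 (x p).2 (y p).2 * σO p (s p).2 (y p).2 (x p).2) := by
    intro x y
    show (∏ p, _) * (∏ p, _) = _
    rw [← Finset.prod_mul_distrib]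
    exact Finset.prod_congr rfl fun p _ => by ring
  simp_rw [hstep]
  have hR : ∀ p, (σI p (t p).1 * σI p (s p).1).trace * (σO p (t p).2 * σO p (s p).2).trace
      = ∑ a : I p × O p, ∑ b : I p × O p,
          (σI p (t p).1 a.1 b.1 * σI p (s p).1 b.1 a.1) *
          (σO p (t p).2 a.2 b.2 * σO p (s p).2 b.2 a.2) := by
    intro p
    rw [trace_mul_eq, trace_mul_eq]
    exact (sum_pair_factor _ _).symm
  rw [Finset.prod_congr rfl fun p _ => hR p]
  exact sum_sum_prod_pi fun p (a b : I p × O p) =>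
    (σI p (t p).1 a.1 b.1 * σI p (s p).1 b.1 a.1) *
    (σO p (t p).2 a.2 b.2 * σO p (s p).2 b.2 a.2)

lemma expand_mul_hsTerm_trace (σI : ∀ p, ιI p → Matrix (I p) (I p) ℂ)
    (σO : ∀ p, ιO p → Matrix (O p) (O p) ℂ) (c : (∀ p, ιI p × ιO p) → ℝ)
    (t : ∀ p, ιI p × ιO p) :
    (expand σI σO c * hsTerm σI σO t).trace
      = ∑ s, (c s : ℂ) * (hsTerm σI σO s * hsTerm σI σO t).trace := by
  rw [expand, Finset.sum_mul, Matrix.trace_sum]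
  refine Finset.sum_congr rfl fun s _ => ?_
  rw [Matrix.smul_mul, Matrix.trace_smul, smul_eq_mul]

lemma expand_injective (σI : ∀ p, ιI p → Matrix (I p) (I p) ℂ)
    (σO : ∀ p, ιO p → Matrix (O p) (O p) ℂ)
    (hI : ∀ p, OrthFam (σI p)) (hO : ∀ p, OrthFam (σO p))
    {c c' : (∀ p, ιI p × ιO p) → ℝ} (h : expand σI σO c = expand σI σO c') : c = c' := by
  funext t
  have h2 := congrArg (fun M => (M * hsTerm σI σO t).trace) h
  simp only [expand_mul_hsTerm_trace] at h2
  have key : ∀ d : (∀ p, ιI p × ιO p) → ℝ,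
      ∑ s, (d s : ℂ) * (hsTerm σI σO s * hsTerm σI σO t).trace
        = (d t : ℂ) * ∏ p, ((σI p (t p).1 * σI p (t p).1).trace *
            (σO p (t p).2 * σO p (t p).2).trace) := by
    intro d
    rw [Finset.sum_eq_single t]
    · rw [hsTerm_mul_trace]
    · intro s _ hst
      rw [hsTerm_mul_trace]
      obtain ⟨p, hp⟩ := Function.ne_iff.mp hst
      have hz : (σI p (s p).1 * σI p (t p).1).trace *
          (σO p (s p).2 * σO p (t p).2).trace = 0 := by
        by_cases h1 : (s p).1 = (t p).1
        · have h2' : (s p).2 ≠ (t p).2 := fun h2'' => hp (Prod.ext h1 h2'')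
          rw [(hO p).1 _ _ h2', mul_zero]
        · rw [(hI p).1 _ _ h1, zero_mul]
      rw [Finset.prod_eq_zero (Finset.mem_univ p) hz, mul_zero]
    · intro h'
      exact absurd (Finset.mem_univ t) h'
  rw [key, key] at h2
  have hN : (∏ p, ((σI p (t p).1 * σI p (t p).1).trace *
      (σO p (t p).2 * σO p (t p).2).trace)) ≠ 0 :=
    Finset.prod_ne_zero_iff.mpr fun p _ => mul_ne_zero ((hI p).2 _) ((hO p).2 _)
  exact_mod_cast mul_right_cancel₀ hN h2

lemma coeff_zero_ne_zero (σI : ∀ p, ιI p → Matrix (I p) (I p) ℂ)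
    (σO : ∀ p, ιO p → Matrix (O p) (O p) ℂ)
    (hσI : ∀ p, IsHSBasis (σI p)) (hσO : ∀ p, IsHSBasis (σO p))
    {V : Matrix ((p : P) → I p × O p) ((p : P) → I p × O p) ℂ}
    {v : (∀ p, ιI p × ιO p) → ℝ}
    (hV : IsProcessWith σI σO V v) : v (fun _ => (0, 0)) ≠ 0 := by
  have htr : V.trace = ∏ p, (Fintype.card (O p) : ℂ) := hV.2.1
  rw [hV.2.2.1] at htr
  have hexp : (expand σI σO v).trace
      = ∑ t, (v t : ℂ) * ∏ p, (σI p (t p).1).trace * (σO p (t p).2).trace := by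
    rw [expand, Matrix.trace_sum]
    refine Finset.sum_congr rfl fun t _ => ?_
    rw [Matrix.trace_smul, hsTerm_trace, smul_eq_mul]
  rw [hexp, Finset.sum_eq_single (fun _ => ((0 : ιI _), (0 : ιO _)))] at htr
  · intro h0
    rw [h0] at htr
    simp only [Complex.ofReal_zero, zero_mul] at htr
    have hcard : (∏ p, (Fintype.card (O p) : ℂ)) ≠ 0 :=
      Finset.prod_ne_zero_iff.mpr fun p _ =>
        Nat.cast_ne_zero.mpr (Nat.pos_iff_ne_zero.mp (hσO p).card_pos)
    exact hcard htr.symm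
  · intro t _ ht
    obtain ⟨p, hp⟩ := Function.ne_iff.mp ht
    have hz : (σI p (t p).1).trace * (σO p (t p).2).trace = 0 := by
      by_cases h1 : (t p).1 = 0
      · have h2 : (t p).2 ≠ 0 := fun h => hp (Prod.ext h1 h)
        rw [(hσO p).2.2.2.1 _ h2, mul_zero]
      · rw [(hσI p).2.2.2.1 _ h1, zero_mul]
    rw [Finset.prod_eq_zero (Finset.mem_univ p) hz, mul_zero]
  · intro h'
    exact absurd (Finset.mem_univ _) h'

end AuxHS

section AuxProd

set_option linter.unusedSectionVars false

variable {P : Type*} [Fintype P] [DecidableEq P]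
  {I' O' I'' O'' : P → Type*}
  [∀ p, Fintype (I' p)] [∀ p, DecidableEq (I' p)]
  [∀ p, Fintype (O' p)] [∀ p, DecidableEq (O' p)]
  [∀ p, Fintype (I'' p)] [∀ p, DecidableEq (I'' p)]
  [∀ p, Fintype (O'' p)] [∀ p, DecidableEq (O'' p)]
  {ιI' ιO' ιI'' ιO'' : P → Type*}
  [∀ p, Fintype (ιI' p)] [∀ p, Zero (ιI' p)]
  [∀ p, Fintype (ιO' p)] [∀ p, Zero (ιO' p)]
  [∀ p, Fintype (ιI'' p)] [∀ p, Zero (ιI'' p)]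
  [∀ p, Fintype (ιO'' p)] [∀ p, Zero (ιO'' p)]

/-- Reindexing equivalence between pairs of multi-indices and combined multi-indices. -/
def combineEquiv (ιI' ιO' ιI'' ιO'' : P → Type*) :
    ((∀ p, ιI' p × ιO' p) × (∀ p, ιI'' p × ιO'' p)) ≃
      (∀ p, (ιI' p × ιI'' p) × (ιO' p × ιO'' p)) where
  toFun ts := combineTerm ts.1 ts.2
  invFun u := (fun p => ((u p).1.1, (u p).2.1), fun p => ((u p).1.2, (u p).2.2))
  left_inv _ := rfl
  right_inv _ := rfl

/-- Splitting equivalence on the level of Hilbert spaces. -/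
def splitEquiv (I' O' I'' O'' : P → Type*) :
    (∀ p, (I' p × I'' p) × (O' p × O'' p)) ≃
      ((∀ p, I' p × O' p) × (∀ p, I'' p × O'' p)) where
  toFun x := (fun p => ((x p).1.1, (x p).2.1), fun p => ((x p).1.2, (x p).2.2))
  invFun ab := fun p => (((ab.1 p).1, (ab.2 p).1), ((ab.1 p).2, (ab.2 p).2))
  left_inv _ := rfl
  right_inv _ := rfl

lemma prodOp_eq_submatrix
    (W : Matrix ((p : P) → I' p × O' p) ((p : P) → I' p × O' p) ℂ)
    (Z : Matrix ((p : P) → I'' p × O'' p) ((p : P) → I'' p × O'' p) ℂ) :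
    prodOp W Z = (W ⊗ₖ Z).submatrix (splitEquiv I' O' I'' O'') (splitEquiv I' O' I'' O'') :=
  rfl

lemma prodOp_posSemidef
    {W : Matrix ((p : P) → I' p × O' p) ((p : P) → I' p × O' p) ℂ}
    {Z : Matrix ((p : P) → I'' p × O'' p) ((p : P) → I'' p × O'' p) ℂ}
    (hW : W.PosSemidef) (hZ : Z.PosSemidef) : (prodOp W Z).PosSemidef := by
  rw [prodOp_eq_submatrix]
  exact (Matrix.posSemidef_submatrix_equiv (splitEquiv I' O' I'' O'')).mpr (posSemidef_kron hW hZ)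

lemma prodOp_trace
    (W : Matrix ((p : P) → I' p × O' p) ((p : P) → I' p × O' p) ℂ)
    (Z : Matrix ((p : P) → I'' p × O'' p) ((p : P) → I'' p × O'' p) ℂ) :
    (prodOp W Z).trace = W.trace * Z.trace := by
  rw [prodOp_eq_submatrix, ← Matrix.trace_kronecker W Z]
  exact Fintype.sum_equiv (splitEquiv I' O' I'' O'') _ _ (fun x => rfl)

lemma prodOp_hsTerm (σI' : ∀ p, ιI' p → Matrix (I' p) (I' p) ℂ)
    (σO' : ∀ p, ιO' p → Matrix (O' p) (O' p) ℂ)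
    (σI'' : ∀ p, ιI'' p → Matrix (I'' p) (I'' p) ℂ)
    (σO'' : ∀ p, ιO'' p → Matrix (O'' p) (O'' p) ℂ)
    (t : ∀ p, ιI' p × ιO' p) (s : ∀ p, ιI'' p × ιO'' p) :
    prodOp (hsTerm σI' σO' t) (hsTerm σI'' σO'' s)
      = hsTerm (fun p => prodBasis (σI' p) (σI'' p)) (fun p => prodBasis (σO' p) (σO'' p))
          (combineTerm t s) := by
  ext x y
  show (∏ p, _) * (∏ p, _) = ∏ p, _
  rw [← Finset.prod_mul_distrib]
  refine Finset.prod_congr rfl fun p _ => ?_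
  simp only [combineTerm, prodBasis, Matrix.kroneckerMap_apply]
  ring

lemma prodOp_sum_sum {A B : Type*} [Fintype A] [Fintype B]
    (a : A → ℝ) (b : B → ℝ)
    (M : A → Matrix ((p : P) → I' p × O' p) ((p : P) → I' p × O' p) ℂ)
    (N : B → Matrix ((p : P) → I'' p × O'' p) ((p : P) → I'' p × O'' p) ℂ) :
    prodOp (∑ t, (a t : ℂ) • M t) (∑ s, (b s : ℂ) • N s)
      = ∑ t, ∑ s, ((a t * b s : ℝ) : ℂ) • prodOp (M t) (N s) := by
  ext x y
  simp only [prodOp, Matrix.sum_apply, Matrix.smul_apply, smul_eq_mul, Fintype.sum_mul_sum]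
  push_cast
  exact Finset.sum_congr rfl fun t _ => Finset.sum_congr rfl fun s _ => by ring

lemma prodOp_expand (σI' : ∀ p, ιI' p → Matrix (I' p) (I' p) ℂ)
    (σO' : ∀ p, ιO' p → Matrix (O' p) (O' p) ℂ)
    (σI'' : ∀ p, ιI'' p → Matrix (I'' p) (I'' p) ℂ)
    (σO'' : ∀ p, ιO'' p → Matrix (O'' p) (O'' p) ℂ)
    (w : (∀ p, ιI' p × ιO' p) → ℝ) (z : (∀ p, ιI'' p × ιO'' p) → ℝ) :
    prodOp (expand σI' σO' w) (expand σI'' σO'' z)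
      = expand (fun p => prodBasis (σI' p) (σI'' p)) (fun p => prodBasis (σO' p) (σO'' p))
          (prodCoeffs w z) := by
  rw [expand, expand, prodOp_sum_sum]
  rw [expand, ← Equiv.sum_comp (combineEquiv ιI' ιO' ιI'' ιO''), Fintype.sum_prod_type]
  refine Finset.sum_congr rfl fun t _ => Finset.sum_congr rfl fun s _ => ?_
  rw [prodOp_hsTerm]
  rfl

end AuxProd


section Statement12

variable {P : Type*} [Fintype P] [DecidableEq P]
  {I' O' I'' O'' I''' O''' : P → Type*}
  [∀ p, Fintype (I' p)] [∀ p, DecidableEq (I' p)]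
  [∀ p, Fintype (O' p)] [∀ p, DecidableEq (O' p)]
  [∀ p, Fintype (I'' p)] [∀ p, DecidableEq (I'' p)]
  [∀ p, Fintype (O'' p)] [∀ p, DecidableEq (O'' p)]
  [∀ p, Fintype (I''' p)] [∀ p, DecidableEq (I''' p)]
  [∀ p, Fintype (O''' p)] [∀ p, DecidableEq (O''' p)]
  {ιI' ιO' ιI'' ιO'' ιI''' ιO''' : P → Type*}
  [∀ p, Fintype (ιI' p)] [∀ p, Zero (ιI' p)]
  [∀ p, Fintype (ιO' p)] [∀ p, Zero (ιO' p)]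
  [∀ p, Fintype (ιI'' p)] [∀ p, Zero (ιI'' p)]
  [∀ p, Fintype (ιO'' p)] [∀ p, Zero (ιO'' p)]
  [∀ p, Fintype (ιI''' p)] [∀ p, Zero (ιI''' p)]
  [∀ p, Fintype (ιO''' p)] [∀ p, Zero (ιO''' p)]

/-- **Persistence of invalidity under further products.** Let `W`, `Z` be processes
(with Hilbert–Schmidt coefficients `w`, `z`) such that the product `P = W ⊗ Z` for the
combined parties is not a valid process. Then for any valid process `V` (with
coefficients `v`) on a matching set of parties, the further product `P ⊗ V` (for the
correspondingly combined parties) is also not a valid process: the nontrivial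
Hilbert–Schmidt term `u` of `P` that is in type on no combined party, tensored with the
identity term of `V`, is a nonzero nontrivial term of `P ⊗ V` that is in type on no
combined party. Consequently, changing the sequence of construction does not help:
the product in the other order, `V ⊗ P`, is not a valid process either. -/
theorem statement12
    (σI' : ∀ p, ιI' p → Matrix (I' p) (I' p) ℂ)
    (σO' : ∀ p, ιO' p → Matrix (O' p) (O' p) ℂ)
    (σI'' : ∀ p, ιI'' p → Matrix (I'' p) (I'' p) ℂ)
    (σO'' : ∀ p, ιO'' p → Matrix (O'' p) (O'' p) ℂ)
    (σI''' : ∀ p, ιI''' p → Matrix (I''' p) (I''' p) ℂ)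
    (σO''' : ∀ p, ιO''' p → Matrix (O''' p) (O''' p) ℂ)
    (hσI' : ∀ p, IsHSBasis (σI' p)) (hσO' : ∀ p, IsHSBasis (σO' p))
    (hσI'' : ∀ p, IsHSBasis (σI'' p)) (hσO'' : ∀ p, IsHSBasis (σO'' p))
    (hσI''' : ∀ p, IsHSBasis (σI''' p)) (hσO''' : ∀ p, IsHSBasis (σO''' p))
    (W : Matrix ((p : P) → I' p × O' p) ((p : P) → I' p × O' p) ℂ)
    (Z : Matrix ((p : P) → I'' p × O'' p) ((p : P) → I'' p × O'' p) ℂ)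
    (V : Matrix ((p : P) → I''' p × O''' p) ((p : P) → I''' p × O''' p) ℂ)
    (w : (∀ p, ιI' p × ιO' p) → ℝ) (z : (∀ p, ιI'' p × ιO'' p) → ℝ)
    (v : (∀ p, ιI''' p × ιO''' p) → ℝ)
    (hW : IsProcessWith σI' σO' W w) (hZ : IsProcessWith σI'' σO'' Z z)
    (hV : IsProcessWith σI''' σO''' V v)
    (hP : ¬ IsProcess (fun p => prodBasis (σI' p) (σI'' p))
        (fun p => prodBasis (σO' p) (σO'' p)) (prodOp W Z)) :
    (∃ u : ∀ p, (ιI' p × ιI'' p) × (ιO' p × ιO'' p),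
        prodCoeffs w z u ≠ 0 ∧ NontrivialTerm u ∧ (∀ p, ¬ InTypeAt u p) ∧
        prodCoeffs (prodCoeffs w z) v
            (combineTerm u (fun q : P => ((0 : ιI''' q), (0 : ιO''' q)))) ≠ 0 ∧
        NontrivialTerm (combineTerm u (fun q : P => ((0 : ιI''' q), (0 : ιO''' q)))) ∧
        (∀ p, ¬ InTypeAt (combineTerm u (fun q : P => ((0 : ιI''' q), (0 : ιO''' q)))) p)) ∧
    ¬ IsProcess (fun p => prodBasis (prodBasis (σI' p) (σI'' p)) (σI''' p))
        (fun p => prodBasis (prodBasis (σO' p) (σO'' p)) (σO''' p))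
        (prodOp (prodOp W Z) V) ∧
    ¬ IsProcess (fun p => prodBasis (σI''' p) (prodBasis (σI' p) (σI'' p)))
        (fun p => prodBasis (σO''' p) (prodBasis (σO' p) (σO'' p)))
        (prodOp V (prodOp W Z)) := by
  classical
  have oI' := fun p => (hσI' p).orthFam
  have oO' := fun p => (hσO' p).orthFam
  have oI'' := fun p => (hσI'' p).orthFam
  have oO'' := fun p => (hσO'' p).orthFam
  have oI''' := fun p => (hσI''' p).orthFam
  have oO''' := fun p => (hσO''' p).orthFam
  have hPexp : prodOp W Z = expand (fun p => prodBasis (σI' p) (σI'' p))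
      (fun p => prodBasis (σO' p) (σO'' p)) (prodCoeffs w z) := by
    rw [hW.2.2.1, hZ.2.2.1, prodOp_expand]
  have hPSD : (prodOp W Z).PosSemidef := prodOp_posSemidef hW.1 hZ.1
  have hTr : (prodOp W Z).trace = ∏ p, (Fintype.card (O' p × O'' p) : ℂ) := by
    rw [prodOp_trace, hW.2.1, hZ.2.1, ← Finset.prod_mul_distrib]
    refine Finset.prod_congr rfl fun p _ => ?_
    rw [Fintype.card_prod]
    push_cast
    ring
  have hbad : ¬ OGCoeffs (prodCoeffs w z) := fun hOG =>
    hP ⟨prodCoeffs w z, hPSD, hTr, hPexp, hOG⟩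
  rw [OGCoeffs] at hbad
  push_neg at hbad
  obtain ⟨u, hu0, hunt, huty⟩ := hbad
  have hv0 : v (fun _ => (0, 0)) ≠ 0 := coeff_zero_ne_zero _ _ hσI''' hσO''' hV
  set s0 : ∀ q : P, ιI''' q × ιO''' q := fun q => ((0 : ιI''' q), (0 : ιO''' q)) with hs0
  have hc1 : prodCoeffs (prodCoeffs w z) v (combineTerm u s0) ≠ 0 := by
    have : prodCoeffs (prodCoeffs w z) v (combineTerm u s0) = prodCoeffs w z u * v s0 := rfl
    rw [this]
    exact mul_ne_zero hu0 hv0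
  have hc2 : NontrivialTerm (combineTerm u s0) := by
    obtain ⟨p, hp⟩ := hunt
    refine ⟨p, fun hcon => hp ?_⟩
    exact ⟨congrArg Prod.fst hcon.1, congrArg Prod.fst hcon.2⟩
  have hc3 : ∀ p, ¬ InTypeAt (combineTerm u s0) p := by
    intro p hcon
    exact huty p ⟨fun h' => hcon.1 (Prod.ext h' rfl), congrArg Prod.fst hcon.2⟩
  have hd1 : prodCoeffs v (prodCoeffs w z) (combineTerm s0 u) ≠ 0 := by
    have : prodCoeffs v (prodCoeffs w z) (combineTerm s0 u) = v s0 * prodCoeffs w z u := rfl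
    rw [this]
    exact mul_ne_zero hv0 hu0
  refine ⟨⟨u, hu0, hunt, huty, hc1, hc2, hc3⟩, ?_, ?_⟩
  · rintro ⟨c, -, -, hcexp, hOG⟩
    have hceq : c = prodCoeffs (prodCoeffs w z) v := by
      refine expand_injective _ _
        (fun p => ((oI' p).prodBasis (oI'' p)).prodBasis (oI''' p))
        (fun p => ((oO' p).prodBasis (oO'' p)).prodBasis (oO''' p)) ?_
      rw [← hcexp, hPexp, hV.2.2.1, prodOp_expand]
    obtain ⟨p, hty⟩ := hOG (combineTerm u s0) (by rw [hceq]; exact hc1) hc2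
    exact hc3 p hty
  · rintro ⟨c, -, -, hcexp, hOG⟩
    have hceq : c = prodCoeffs v (prodCoeffs w z) := by
      refine expand_injective _ _
        (fun p => (oI''' p).prodBasis ((oI' p).prodBasis (oI'' p)))
        (fun p => (oO''' p).prodBasis ((oO' p).prodBasis (oO'' p))) ?_
      rw [← hcexp, hPexp, hV.2.2.1, prodOp_expand]
    have hd2 : NontrivialTerm (combineTerm s0 u) := by
      obtain ⟨p, hp⟩ := hunt
      refine ⟨p, fun hcon => hp ?_⟩
      exact ⟨congrArg Prod.snd hcon.1, congrArg Prod.snd hcon.2⟩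
    obtain ⟨p, hty⟩ := hOG (combineTerm s0 u) (by rw [hceq]; exact hd1) hd2
    refine huty p ⟨fun h' => hty.1 (Prod.ext rfl h'), congrArg Prod.snd hty.2⟩

end Statement12

end ProcessPaper
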